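/- Let p be a natural number, c > 0, q > 0, x0 ≥ 0. Then the differential entropy of the IF3 distribution, -∫_{x0}^∞ f(x)·ln(f(x)) dx with f(x) = (q/c)·((p+1)^(-1/q) + (x-x0)/c)^(-q-1)·(1 - (1 + (p+1)^(1/q)·(x-x0)/c)^(-q))^p, equals -ln(q/c) + ((q+1)/q)·(H_{p+1} - ln(p+1)) + p/(p+1), where H_{p+1} = Σ_{k=1}^{p+1} 1/k. -/

import Mathlib

open MeasureTheory Real

lemma geom_aux (p : ℕ) (u : ℝ) :
    (∑ j ∈ Finset.range (p + 1), (1 - u) ^ j) * u = 1 - (1 - u) ^ (p + 1) := by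
  linear_combination (-1 : ℝ) * geom_sum_mul (1 - u) (p + 1)

lemma log_int01 : IntervalIntegrable Real.log MeasureTheory.volume 0 1 := by
  rw [intervalIntegrable_iff_integrableOn_Ioc_of_le zero_le_one]
  have hg : IntegrableOn (fun u : ℝ => 2 * u ^ (-(1/2) : ℝ)) (Set.Ioc 0 1) := by
    have h := (intervalIntegral.intervalIntegrable_rpow' (a := 0) (b := 1)
      (r := -(1/2)) (by norm_num)).const_mul 2
    rwa [intervalIntegrable_iff_integrableOn_Ioc_of_le zero_le_one] at h
  refine hg.integrable.mono Real.measurable_log.aestronglyMeasurable ?_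
  rw [ae_restrict_iff' measurableSet_Ioc]
  filter_upwards with u hu
  have hu0 : 0 < u := hu.1
  have hrp : 0 < u ^ (-(1/2) : ℝ) := Real.rpow_pos_of_pos hu0 _
  have h1 : Real.log (u ^ (-(1/2) : ℝ)) ≤ u ^ (-(1/2) : ℝ) - 1 :=
    Real.log_le_sub_one_of_pos hrp
  rw [Real.log_rpow hu0] at h1
  have h2 : Real.log u ≤ 0 := Real.log_nonpos hu0.le hu.2
  rw [Real.norm_eq_abs, Real.norm_eq_abs, abs_of_nonpos h2, abs_of_pos (by positivity)]
  linarith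

lemma beta_log_integral (p : ℕ) (L B : ℝ) :
    ∫ u in (0:ℝ)..1,
        (((p:ℝ) + 1) * (1 - u) ^ p * (L + B * Real.log u + (p:ℝ) * Real.log (1 - u)))
      = L - B * (∑ k ∈ Finset.range (p + 1), (1:ℝ) / ((k:ℝ) + 1)) - (p:ℝ) / ((p:ℝ) + 1) := by
  set W : ℝ → ℝ := fun u =>
    ((p:ℝ) + 1) * (1 - u) ^ p * (L + B * Real.log u + (p:ℝ) * Real.log (1 - u)) with hW
  set Φ : ℝ → ℝ := fun u =>
    L * (-(1 - u) ^ (p + 1))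
      + B * ((1 - (1 - u) ^ (p + 1)) * Real.log u
          + ∑ j ∈ Finset.range (p + 1), (1 - u) ^ (j + 1) / ((j:ℝ) + 1))
      + (p:ℝ) * (-((1 - u) ^ (p + 1) * Real.log (1 - u)) + (1 - u) ^ (p + 1) / ((p:ℝ) + 1))
    with hΦ
  have hΦc : Continuous Φ := by
    have hcs : Continuous fun u : ℝ => 1 - u := continuous_const.sub continuous_id
    have c1 : Continuous fun u : ℝ => u * Real.log u := Real.continuous_mul_log
    have c2 : Continuous fun u : ℝ => (1 - u) * Real.log (1 - u) :=
      Real.continuous_mul_log.comp hcs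
    have hfun : Φ = fun u =>
        L * (-(1 - u) ^ (p + 1))
          + B * ((∑ j ∈ Finset.range (p + 1), (1 - u) ^ j) * (u * Real.log u)
              + ∑ j ∈ Finset.range (p + 1), (1 - u) ^ (j + 1) / ((j:ℝ) + 1))
          + (p:ℝ) * (-((1 - u) ^ p * ((1 - u) * Real.log (1 - u)))
              + (1 - u) ^ (p + 1) / ((p:ℝ) + 1)) := by
      funext u
      have h1 : (∑ j ∈ Finset.range (p + 1), (1 - u) ^ j) * (u * Real.log u)
          = (1 - (1 - u) ^ (p + 1)) * Real.log u := by
        rw [← mul_assoc, geom_aux]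
      have h2 : (1 - u) ^ p * ((1 - u) * Real.log (1 - u))
          = (1 - u) ^ (p + 1) * Real.log (1 - u) := by ring
      rw [hΦ, h1, h2]
    rw [hfun]
    refine Continuous.add (Continuous.add ?_ ?_) ?_
    · exact continuous_const.mul ((hcs.pow _).neg)
    · exact continuous_const.mul
        (((continuous_finset_sum _ fun j _ => hcs.pow j).mul c1).add
          (continuous_finset_sum _ fun j _ => (hcs.pow (j + 1)).div_const _))
    · exact continuous_const.mul
        ((((hcs.pow p).mul c2).neg).add ((hcs.pow (p + 1)).div_const _))
  have hderiv : ∀ u ∈ Set.Ioo (0:ℝ) 1, HasDerivAt Φ (W u) u := by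
    intro u hu
    have hu0 : (0:ℝ) < u := hu.1
    have hv : (0:ℝ) < 1 - u := by linarith [hu.2]
    have hone : HasDerivAt (fun u : ℝ => 1 - u) (-1) u := (hasDerivAt_id u).const_sub 1
    have hpow' : HasDerivAt (fun u : ℝ => (1 - u) ^ (p + 1))
        (-(((p:ℝ) + 1) * (1 - u) ^ p)) u := by
      have h := hone.pow (p + 1)
      refine h.congr_deriv ?_
      push_cast [Nat.add_sub_cancel]
      ring
    have hlog : HasDerivAt Real.log u⁻¹ u := Real.hasDerivAt_log hu0.ne'
    have hq1 : HasDerivAt (fun u : ℝ => 1 - (1 - u) ^ (p + 1))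
        (((p:ℝ) + 1) * (1 - u) ^ p) u := by
      have := hpow'.const_sub 1
      simpa using this
    have hlog2 : HasDerivAt (fun u : ℝ => Real.log (1 - u)) (-(1 - u)⁻¹) u := by
      have := (Real.hasDerivAt_log hv.ne').comp u hone
      rw [show (-(1 - u)⁻¹) = (1 - u)⁻¹ * -1 by ring]
      exact this
    have hsum : HasDerivAt
        (fun u : ℝ => ∑ j ∈ Finset.range (p + 1), (1 - u) ^ (j + 1) / ((j:ℝ) + 1))
        (∑ j ∈ Finset.range (p + 1), -((1 - u) ^ j)) u := by
      refine HasDerivAt.fun_sum fun j _ => ?_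
      have h := (hone.pow (j + 1)).div_const ((j:ℝ) + 1)
      refine h.congr_deriv ?_
      have hj : ((j:ℝ) + 1) ≠ 0 := by positivity
      push_cast [Nat.add_sub_cancel]
      field_simp
    have hbig :=
      (((hpow'.fun_neg.const_mul L).fun_add
        (((hq1.fun_mul hlog).fun_add hsum).const_mul B)).fun_add
        ((((hpow'.fun_mul hlog2).fun_neg).fun_add (hpow'.div_const ((p:ℝ) + 1))).const_mul (p:ℝ)))
    refine hbig.congr_deriv ?_
    have hS := geom_aux p u
    have e1 : (1 - (1 - u) ^ (p + 1)) * u⁻¹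
        = ∑ j ∈ Finset.range (p + 1), (1 - u) ^ j := by
      rw [← hS]
      field_simp
    have e2 : ∑ j ∈ Finset.range (p + 1), -((1 - u) ^ j)
        = -∑ j ∈ Finset.range (p + 1), (1 - u) ^ j := by
      simp [Finset.sum_neg_distrib]
    rw [e2, e1]
    field_simp
    ring
  have hcs : Continuous fun u : ℝ => 1 - u := continuous_const.sub continuous_id
  have hint : IntervalIntegrable W MeasureTheory.volume 0 1 := by
    set Wc : ℝ → ℝ := fun u =>
      ((p:ℝ) + 1) * (1 - u) ^ p * L
        - (B * ((p:ℝ) + 1)) * ((∑ j ∈ Finset.range p, (1 - u) ^ j) * (u * Real.log u))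
        + ((p:ℝ) * ((p:ℝ) + 1)) * ((1 - u) ^ (p - 1) * ((1 - u) * Real.log (1 - u)))
      with hWc
    have hWeq : W = fun u => Wc u + (B * ((p:ℝ) + 1)) * Real.log u := by
      funext u
      have hg : (∑ j ∈ Finset.range p, (1 - u) ^ j) * u = 1 - (1 - u) ^ p := by
        linear_combination (-1 : ℝ) * geom_sum_mul (1 - u) p
      have hp2 : (p:ℝ) * ((1 - u) ^ (p - 1) * ((1 - u) * Real.log (1 - u)))
          = (p:ℝ) * ((1 - u) ^ p * Real.log (1 - u)) := by
        cases p with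
        | zero => simp
        | succ m =>
          push_cast [Nat.add_sub_cancel]
          ring
      rw [hW, hWc]
      linear_combination (B * ((p:ℝ) + 1) * Real.log u) * hg - ((p:ℝ) + 1) * hp2
    rw [hWeq]
    refine IntervalIntegrable.add ?_ (log_int01.const_mul _)
    have c1 : Continuous fun u : ℝ => u * Real.log u := Real.continuous_mul_log
    have c2 : Continuous fun u : ℝ => (1 - u) * Real.log (1 - u) :=
      Real.continuous_mul_log.comp hcs
    exact ((((continuous_const.mul (hcs.pow p)).mul continuous_const).sub
        (continuous_const.mul
          ((continuous_finset_sum _ fun j _ => hcs.pow j).mul c1))).add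
      (continuous_const.mul ((hcs.pow (p - 1)).mul c2))).intervalIntegrable 0 1
  have hkey : ∫ u in (0:ℝ)..1, W u = Φ 1 - Φ 0 :=
    intervalIntegral.integral_eq_sub_of_hasDeriv_right_of_le zero_le_one
      hΦc.continuousOn (fun u hu => (hderiv u hu).hasDerivWithinAt) hint
  have hΦ1 : Φ 1 = 0 := by
    simp [hΦ, zero_pow]
  have hΦ0 : Φ 0 = -L + B * (∑ k ∈ Finset.range (p + 1), (1:ℝ) / ((k:ℝ) + 1))
      + (p:ℝ) / ((p:ℝ) + 1) := by
    simp [hΦ, one_div, div_eq_mul_inv]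
  rw [hkey, hΦ1, hΦ0]
  ring

/-- The differential entropy of the IF3 distribution with natural interpolation
parameter `p`. -/
theorem if3_entropy (p : ℕ) (c q x0 : ℝ) (hc : 0 < c) (hq : 0 < q) (hx0 : 0 ≤ x0)
    (f : ℝ → ℝ)
    (hf : ∀ x, f x =
      q / c * (((p : ℝ) + 1) ^ (-1 / q) + (x - x0) / c) ^ (-q - 1) *
        (1 - (1 + ((p : ℝ) + 1) ^ (1 / q) * ((x - x0) / c)) ^ (-q)) ^ p) :
    -∫ x in Set.Ioi x0, f x * Real.log (f x) =
      -Real.log (q / c) +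
        (q + 1) / q *
          ((∑ k ∈ Finset.range (p + 1), (1 : ℝ) / (k + 1)) - Real.log ((p : ℝ) + 1)) +
        (p : ℝ) / ((p : ℝ) + 1) := by
  have hq' : q ≠ 0 := hq.ne'
  have hc' : c ≠ 0 := hc.ne'
  set A : ℝ := (p : ℝ) + 1 with hA
  have hA0 : (0:ℝ) < A := by positivity
  set r : ℝ := -1 / q with hr
  have hrneg : r < 0 := div_neg_of_neg_of_pos (by norm_num) hq
  set φ : ℝ → ℝ := fun u => x0 + c * A ^ r * (u ^ r - 1) with hφ
  set φ' : ℝ → ℝ := fun u => c * A ^ r * (r * u ^ (r - 1)) with hφ'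
  have hAr : (0:ℝ) < A ^ r := Real.rpow_pos_of_pos hA0 r
  have hca : c * A ^ r ≠ 0 := by positivity
  have hArr : A ^ r * A ^ (1 / q : ℝ) = 1 := by
    rw [← Real.rpow_add hA0, hr, show -1 / q + 1 / q = 0 from by ring, Real.rpow_zero]
  have hself : ∀ u : ℝ, 0 < u → (u ^ r) ^ (-q) = u := by
    intro u hu
    rw [← Real.rpow_mul hu.le, hr, show -1 / q * -q = 1 from by field_simp, Real.rpow_one]
  have hinj : Set.InjOn φ (Set.Ioo (0:ℝ) 1) := by
    intro u hu v hv h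
    rw [hφ] at h
    simp only [add_right_inj] at h
    have h2 : u ^ r = v ^ r := by
      have h3 := mul_left_cancel₀ hca h
      linarith
    have := congrArg (fun z => z ^ (-q)) h2
    simpa [hself u hu.1, hself v hv.1] using this
  have himg : φ '' Set.Ioo (0:ℝ) 1 = Set.Ioi x0 := by
    ext x
    simp only [Set.mem_image, Set.mem_Ioo, Set.mem_Ioi]
    constructor
    · rintro ⟨u, ⟨hu0, hu1⟩, rfl⟩
      have h1 : 1 < u ^ r := by
        rw [Real.one_lt_rpow_iff_of_pos hu0]
        exact Or.inr ⟨hu1, hrneg⟩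
      have h2 := mul_pos (mul_pos hc hAr) (sub_pos.mpr h1)
      rw [hφ]
      simp only
      linarith
    · intro hx
      set w : ℝ := 1 + A ^ (1 / q : ℝ) * ((x - x0) / c) with hw
      have hw1 : 1 < w := by
        have : 0 < A ^ (1 / q : ℝ) * ((x - x0) / c) :=
          mul_pos (Real.rpow_pos_of_pos hA0 _) (div_pos (by linarith) hc)
        rw [hw]; linarith
      have hw0 : (0:ℝ) < w := by linarith
      refine ⟨w ^ (-q), ⟨Real.rpow_pos_of_pos hw0 _,
        Real.rpow_lt_one_of_one_lt_of_neg hw1 (by linarith)⟩, ?_⟩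
      have hwr : (w ^ (-q)) ^ r = w := by
        rw [← Real.rpow_mul hw0.le, hr, show -q * (-1 / q) = 1 from by field_simp,
          Real.rpow_one]
      rw [hφ]
      simp only
      rw [hwr, hw]
      have hx1 : c * A ^ r * (1 + A ^ (1 / q : ℝ) * ((x - x0) / c) - 1) = x - x0 := by
        field_simp
        linear_combination (x - x0) * hArr
      linarith
  have hderivW : ∀ u ∈ Set.Ioo (0:ℝ) 1, HasDerivWithinAt φ (φ' u) (Set.Ioo (0:ℝ) 1) u := by
    intro u hu
    have h := (((Real.hasDerivAt_rpow_const (p := r) (Or.inl hu.1.ne')).sub_const 1).const_mul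
      (c * A ^ r)).const_add x0
    exact h.hasDerivWithinAt
  rw [← himg, MeasureTheory.integral_image_eq_integral_abs_deriv_smul measurableSet_Ioo
    hderivW hinj]
  have hpt : Set.EqOn (fun u => |φ' u| • (f (φ u) * Real.log (f (φ u))))
      (fun u => ((p:ℝ) + 1) * (1 - u) ^ p *
        ((Real.log (q / c) + (q + 1) / q * Real.log A)
          + (q + 1) / q * Real.log u + (p:ℝ) * Real.log (1 - u)))
      (Set.Ioo (0:ℝ) 1) := by
    intro u hu
    obtain ⟨hu0, hu1⟩ := hu
    have hv : (0:ℝ) < 1 - u := by linarith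
    have hur : (0:ℝ) < u ^ r := Real.rpow_pos_of_pos hu0 r
    have ht : (φ u - x0) / c = A ^ r * (u ^ r - 1) := by
      rw [hφ]; field_simp; try ring
    have hE1 : A ^ r + (φ u - x0) / c = A ^ r * u ^ r := by rw [ht]; ring
    have hE3 : 1 + A ^ (1 / q : ℝ) * ((φ u - x0) / c) = u ^ r := by
      rw [ht, ← mul_assoc, mul_comm (A ^ (1 / q : ℝ)) (A ^ r), hArr]
      ring
    have hfφ : f (φ u) = q / c * (A ^ ((q + 1) / q) * u ^ ((q + 1) / q)) * (1 - u) ^ p := by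
      rw [hf (φ u), hE1, hE3, hself u hu0]
      congr 2
      rw [Real.mul_rpow hAr.le hur.le, ← Real.rpow_mul hA0.le, ← Real.rpow_mul hu0.le, hr,
        show -1 / q * (-q - 1) = (q + 1) / q from by field_simp; try ring]
    have habs : |φ' u| = c * A ^ r * ((1 / q) * u ^ (r - 1)) := by
      have hneg : φ' u = -(c * A ^ r * ((1 / q) * u ^ (r - 1))) := by
        rw [hφ', hr]; ring
      rw [hneg, abs_neg, abs_of_pos (by positivity)]
    have hmulf : |φ' u| * f (φ u) = ((p:ℝ) + 1) * (1 - u) ^ p := by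
      rw [habs, hfφ,
        show c * A ^ r * (1 / q * u ^ (r - 1)) *
            (q / c * (A ^ ((q + 1) / q) * u ^ ((q + 1) / q)) * (1 - u) ^ p)
          = A ^ r * A ^ ((q + 1) / q) * (u ^ (r - 1) * u ^ ((q + 1) / q)) * (1 - u) ^ p
          from by field_simp,
        ← Real.rpow_add hA0, ← Real.rpow_add hu0, hr,
        show -1 / q + (q + 1) / q = 1 from by field_simp; try ring,
        show -1 / q - 1 + (q + 1) / q = 0 from by field_simp; try ring,
        Real.rpow_one, Real.rpow_zero, mul_one, hA]
    have h1 : q / c ≠ 0 := by positivity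
    have h2 : A ^ ((q + 1) / q) * u ^ ((q + 1) / q) ≠ 0 := by positivity
    have h3 : (1 - u) ^ p ≠ 0 := pow_ne_zero _ hv.ne'
    have hlogf : Real.log (f (φ u)) = Real.log (q / c)
        + ((q + 1) / q * Real.log A + (q + 1) / q * Real.log u)
        + (p:ℝ) * Real.log (1 - u) := by
      have h2a : A ^ ((q + 1) / q) ≠ 0 := by positivity
      have h2b : u ^ ((q + 1) / q) ≠ 0 := by positivity
      rw [hfφ, Real.log_mul (mul_ne_zero h1 h2) h3, Real.log_mul h1 h2,
        Real.log_mul h2a h2b]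
      rw [Real.log_rpow hA0]
      rw [Real.log_rpow hu0]
      try rw [Real.log_pow]
      try ring
    simp only [smul_eq_mul]
    rw [← mul_assoc, hmulf, hlogf]
    ring
  rw [MeasureTheory.setIntegral_congr_fun measurableSet_Ioo hpt,
    ← MeasureTheory.integral_Ioc_eq_integral_Ioo, ← intervalIntegral.integral_of_le zero_le_one,
    beta_log_integral p (Real.log (q / c) + (q + 1) / q * Real.log A) ((q + 1) / q)]
  rw [hA]
  push_cast
  ring
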